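/- Let μ be the countable product of the uniform probability measures on [−1/2, 1/2], i.e. the probability measure on [−1/2,1/2]^ℕ with each coordinate y_j independent and uniformly distributed on [−1/2,1/2]. Let (b_j)_{j≥1} be a summable sequence of nonnegative real numbers and let s ≥ 0 be an integer. Then for every integer ℓ ≥ 0, the function y ↦ (Σ_{j≥s+1} b_j y_j)^ℓ is μ-integrable; if ℓ is odd its integral is 0; and if ℓ = 2m is even then 0 ≤ ∫ (Σ_{j≥s+1} b_j y_j)^{2m} dμ(y) ≤ Σ_ν ( (2m)! / ∏_{j≥1} ν_j! ) ∏_{j≥1} b_j^{ν_j}, where the sum is over all finitely supported multi-indices ν with |ν| = 2m, ν_j = 0 for all j ≤ s, and ν_j even for all j ≥ s+1. -/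

import Mathlib

open MeasureTheory ProbabilityTheory Filter Finset Topology

namespace Stmt11Aux

/-- n-th moment of the uniform distribution on `[-1/2,1/2]`. -/
noncomputable def M (n : ℕ) : ℝ := ∫ x in Set.Icc (-(1/2) : ℝ) (1/2), x ^ n

lemma M_eq (n : ℕ) :
    M n = ((1/2 : ℝ) ^ (n+1) - (-(1/2) : ℝ) ^ (n+1)) / (n+1) := by
  have h : (-(1/2) : ℝ) ≤ 1/2 := by norm_num
  rw [M, MeasureTheory.integral_Icc_eq_integral_Ioc,
    ← intervalIntegral.integral_of_le h, integral_pow]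

lemma M_odd {n : ℕ} (h : Odd n) : M n = 0 := by
  rw [M_eq, (Odd.add_one h).neg_pow, sub_self, zero_div]

lemma M_nonneg (n : ℕ) : 0 ≤ M n := by
  rcases Nat.even_or_odd n with he | ho
  · have h1 : Odd (n + 1) := Even.add_one he
    rw [M_eq, h1.neg_pow, sub_neg_eq_add]
    positivity
  · rw [M_odd ho]

lemma M_le_one (n : ℕ) : M n ≤ 1 := by
  rcases Nat.even_or_odd n with he | ho
  · have h1 : Odd (n + 1) := Even.add_one he
    rw [M_eq, h1.neg_pow, sub_neg_eq_add]
    rw [div_le_one (by positivity)]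
    have h2 : (1/2 : ℝ) ^ (n+1) ≤ 1/2 := by
      calc (1/2 : ℝ) ^ (n+1) ≤ (1/2 : ℝ) ^ 1 :=
        pow_le_pow_of_le_one (by norm_num) (by norm_num) (by omega)
      _ = 1/2 := pow_one _
    have h3 : (1:ℝ) ≤ (n:ℝ) + 1 := by linarith [Nat.cast_nonneg (α := ℝ) n]
    linarith
  · rw [M_odd ho]; norm_num

end Stmt11Aux

open Stmt11Aux

theorem stmt11 (μ : Measure (ℕ → ℝ)) [IsProbabilityMeasure μ]
    (hIndep : iIndepFun
      (fun j => fun y : ℕ → ℝ => y j) μ)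
    (hUnif : ∀ j : ℕ, μ.map (fun y : ℕ → ℝ => y j) =
      volume.restrict (Set.Icc (-(1 / 2) : ℝ) (1 / 2)))
    (b : ℕ → ℝ) (hb : ∀ n, 0 ≤ b n) (hsum : Summable b) (s : ℕ) (l : ℕ) :
    Integrable (fun y : ℕ → ℝ => (∑' n : ℕ, b (n + s) * y (n + s)) ^ l) μ ∧
    (Odd l → ∫ y : ℕ → ℝ, (∑' n : ℕ, b (n + s) * y (n + s)) ^ l ∂μ = 0) ∧
    (∀ m : ℕ, l = 2 * m →
      0 ≤ ∫ y : ℕ → ℝ, (∑' n : ℕ, b (n + s) * y (n + s)) ^ l ∂μ ∧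
      ∫ y : ℕ → ℝ, (∑' n : ℕ, b (n + s) * y (n + s)) ^ l ∂μ ≤
        ∑' ν : {ν : ℕ →₀ ℕ // ν.sum (fun _ n => n) = 2 * m ∧
            (∀ j < s, ν j = 0) ∧ ∀ j, s ≤ j → Even (ν j)},
          ((Nat.factorial (2 * m) : ℝ) /
              ((ν : ℕ →₀ ℕ).prod fun _ n => (Nat.factorial n : ℝ))) *
            ((ν : ℕ →₀ ℕ).prod fun j n => b j ^ n)) := by
  classical
  set B : ℝ := ∑' n, b n with hBdef
  have hB0 : 0 ≤ B := tsum_nonneg hb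
  have hmeas : ∀ j, Measurable fun y : ℕ → ℝ => y j := fun j => measurable_pi_apply j
  -- a.e., all coordinates lie in [-1/2, 1/2]
  have hae : ∀ᵐ y ∂μ, ∀ j, y j ∈ Set.Icc (-(1/2) : ℝ) (1/2) := by
    rw [ae_all_iff]
    intro j
    have h1 : μ ((fun y : ℕ → ℝ => y j) ⁻¹' Set.Icc (-(1/2) : ℝ) (1/2)) = 1 := by
      rw [← Measure.map_apply (hmeas j) measurableSet_Icc, hUnif j,
        Measure.restrict_apply measurableSet_Icc, Set.inter_self, Real.volume_Icc]
      norm_num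
    have h2 : μ ((fun y : ℕ → ℝ => y j) ⁻¹' Set.Icc (-(1/2) : ℝ) (1/2))ᶜ = 0 := by
      rw [prob_compl_eq_zero_iff ((hmeas j) measurableSet_Icc)]
      exact h1
    rw [ae_iff]
    exact h2
  -- partial sums
  set Sk : ℕ → (ℕ → ℝ) → ℝ := fun k y => ∑ j ∈ Finset.Ico s (s+k), b j * y j with hSkdef
  have hSk_eq : ∀ k y, Sk k y = ∑ n ∈ Finset.range k, b (n + s) * y (n + s) := by
    intro k y
    rw [hSkdef]
    simp only []
    rw [Finset.sum_Ico_eq_sum_range]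
    simp [add_comm s]
  have hSk_meas : ∀ k, Measurable (Sk k) := fun k =>
    Finset.measurable_sum _ fun j _ => measurable_const.mul (hmeas j)
  have hsum' : Summable fun n => b (n + s) := (summable_nat_add_iff s).2 hsum
  have htail : (∑' n, b (n + s)) ≤ B := by
    have h := Summable.sum_add_tsum_nat_add (f := b) s hsum
    have h2 : 0 ≤ ∑ i ∈ Finset.range s, b i := Finset.sum_nonneg fun i _ => hb i
    linarith
  -- convergence on the good set
  have hconv : ∀ᵐ y ∂μ, Tendsto (fun k => Sk k y) atTop
      (𝓝 (∑' n : ℕ, b (n + s) * y (n + s))) := by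
    filter_upwards [hae] with y hy
    have hys : Summable fun n => b (n + s) * y (n + s) := by
      refine Summable.of_norm_bounded hsum' fun n => ?_
      have h1 := hy (n + s)
      rw [Set.mem_Icc] at h1
      rw [Real.norm_eq_abs, abs_mul, abs_of_nonneg (hb _)]
      have : |y (n + s)| ≤ 1 := by rw [abs_le]; constructor <;> linarith
      calc b (n+s) * |y (n+s)| ≤ b (n+s) * 1 := by
            exact mul_le_mul_of_nonneg_left this (hb _)
      _ = b (n+s) := mul_one _
    have := hys.hasSum.tendsto_sum_nat
    refine this.congr fun k => ?_
    exact (hSk_eq k y).symm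
  -- uniform bound
  have hbd : ∀ᵐ y ∂μ, ∀ k, |Sk k y| ≤ B := by
    filter_upwards [hae] with y hy k
    calc |Sk k y| ≤ ∑ j ∈ Finset.Ico s (s+k), |b j * y j| := Finset.abs_sum_le_sum_abs _ _
    _ ≤ ∑ j ∈ Finset.Ico s (s+k), b j := by
        refine Finset.sum_le_sum fun j _ => ?_
        have h1 := hy j
        rw [Set.mem_Icc] at h1
        rw [abs_mul, abs_of_nonneg (hb _)]
        have : |y j| ≤ 1 := by rw [abs_le]; constructor <;> linarith
        calc b j * |y j| ≤ b j * 1 := mul_le_mul_of_nonneg_left this (hb _)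
        _ = b j := mul_one _
    _ ≤ B := Summable.sum_le_tsum _ (fun i _ => hb i) hsum
  have hfbd : ∀ᵐ y ∂μ, |∑' n : ℕ, b (n + s) * y (n + s)| ≤ B := by
    filter_upwards [hconv, hbd] with y h1 h2
    have := le_of_tendsto' (h1.abs) h2
    exact this
  set f : (ℕ → ℝ) → ℝ := fun y => (∑' n : ℕ, b (n + s) * y (n + s)) ^ l with hfdef
  have hFlim : ∀ᵐ y ∂μ, Tendsto (fun k => (Sk k y) ^ l) atTop (𝓝 (f y)) := by
    filter_upwards [hconv] with y h1
    exact h1.pow l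
  have hFmeas : ∀ k, AEStronglyMeasurable (fun y => (Sk k y) ^ l) μ :=
    fun k => ((hSk_meas k).pow_const l).aestronglyMeasurable
  have hfmeas : AEStronglyMeasurable f μ :=
    aestronglyMeasurable_of_tendsto_ae atTop hFmeas hFlim
  have hFbd : ∀ k, ∀ᵐ y ∂μ, ‖(Sk k y) ^ l‖ ≤ B ^ l := by
    intro k
    filter_upwards [hbd] with y h1
    rw [Real.norm_eq_abs, abs_pow]
    exact pow_le_pow_left₀ (abs_nonneg _) (h1 k) l
  have hfInt : Integrable f μ := by
    refine Integrable.mono' (integrable_const (B ^ l)) hfmeas ?_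
    filter_upwards [hfbd] with y h1
    rw [Real.norm_eq_abs, hfdef, abs_pow]
    exact pow_le_pow_left₀ (abs_nonneg _) h1 l
  have hTend : Tendsto (fun k => ∫ y, (Sk k y) ^ l ∂μ) atTop (𝓝 (∫ y, f y ∂μ)) := by
    refine tendsto_integral_of_dominated_convergence (fun _ => B ^ l) hFmeas
      (integrable_const _) hFbd hFlim
  -- integrability of coordinate-power products
  have hprodInt : ∀ (t : Finset ℕ) (ν : ℕ → ℕ),
      Integrable (fun y : ℕ → ℝ => ∏ j ∈ t, (y j) ^ (ν j)) μ := by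
    intro t ν
    refine Integrable.mono' (integrable_const 1)
      (Finset.measurable_prod _ fun j _ => (hmeas j).pow_const (ν j)).aestronglyMeasurable ?_
    filter_upwards [hae] with y hy
    rw [Real.norm_eq_abs, Finset.abs_prod]
    refine Finset.prod_le_one (fun j _ => abs_nonneg _) fun j _ => ?_
    rw [abs_pow]
    refine pow_le_one₀ (abs_nonneg _) ?_
    have h1 := hy j
    rw [Set.mem_Icc] at h1
    rw [abs_le]; constructor <;> linarith
  -- moments of coordinates
  have hmomInt : ∀ (j n : ℕ), ∫ y, (y j) ^ n ∂μ = M n := by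
    intro j n
    have h1 : ∫ x, x ^ n ∂(μ.map (fun y : ℕ → ℝ => y j)) = ∫ y, (y j) ^ n ∂μ :=
      integral_map (hmeas j).aemeasurable
        (measurable_id.pow_const n).aestronglyMeasurable
    rw [← h1, hUnif j]
    rfl
  -- product formula via independence
  have hprodEq : ∀ (t : Finset ℕ) (ν : ℕ → ℕ),
      ∫ y, ∏ j ∈ t, (y j) ^ (ν j) ∂μ = ∏ j ∈ t, M (ν j) := by
    intro t
    induction t using Finset.cons_induction with
    | empty => intro ν; simp
    | cons i t hi ih =>
      intro ν
      have hF : ∀ j : ℕ, Measurable fun y : ℕ → ℝ => (y j) ^ (ν j) :=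
        fun j => (hmeas j).pow_const (ν j)
      have hcomp : iIndepFun
          (fun j => fun y : ℕ → ℝ => (y j) ^ (ν j)) μ :=
        hIndep.comp (fun j (x : ℝ) => x ^ (ν j)) fun j => measurable_id.pow_const (ν j)
      have h2 := hcomp.indepFun_finsetProd_of_notMem hF hi
      have h3 : IndepFun (fun y : ℕ → ℝ => ∏ j ∈ t, (y j) ^ (ν j))
          (fun y : ℕ → ℝ => (y i) ^ (ν i)) μ := by
        have : (∏ j ∈ t, fun y : ℕ → ℝ => (y j) ^ (ν j)) =
            fun y : ℕ → ℝ => ∏ j ∈ t, (y j) ^ (ν j) := by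
          funext y
          simp [Finset.prod_apply]
        rwa [this] at h2
      calc ∫ y, ∏ j ∈ Finset.cons i t hi, (y j) ^ (ν j) ∂μ
          = ∫ y, (∏ j ∈ t, (y j) ^ (ν j)) * (y i) ^ (ν i) ∂μ := by
            congr 1; funext y; rw [Finset.prod_cons, mul_comm]
      _ = (∫ y, ∏ j ∈ t, (y j) ^ (ν j) ∂μ) * ∫ y, (y i) ^ (ν i) ∂μ :=
            h3.integral_fun_mul_eq_mul_integral (hprodInt t ν).aestronglyMeasurable
              (by simpa using (hprodInt {i} ν).aestronglyMeasurable)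
      _ = ∏ j ∈ Finset.cons i t hi, M (ν j) := by
            rw [ih ν, hmomInt, Finset.prod_cons, mul_comm]
  -- expansion of the moments of partial sums
  have hTk : ∀ k, ∫ y, (Sk k y) ^ l ∂μ =
      ∑ ν ∈ Finset.piAntidiag (Finset.Ico s (s+k)) l,
        (Nat.multinomial (Finset.Ico s (s+k)) ν : ℝ) *
          ((∏ j ∈ Finset.Ico s (s+k), b j ^ ν j) *
            ∏ j ∈ Finset.Ico s (s+k), M (ν j)) := by
    intro k
    have expand : ∀ y : ℕ → ℝ, (Sk k y) ^ l =
        ∑ ν ∈ Finset.piAntidiag (Finset.Ico s (s+k)) l,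
          (Nat.multinomial (Finset.Ico s (s+k)) ν : ℝ) *
            ((∏ j ∈ Finset.Ico s (s+k), b j ^ ν j) *
              ∏ j ∈ Finset.Ico s (s+k), (y j) ^ (ν j)) := by
      intro y
      rw [hSkdef]
      simp only []
      rw [Finset.sum_pow_eq_sum_piAntidiag]
      refine Finset.sum_congr rfl fun ν _ => ?_
      rw [← Finset.prod_mul_distrib]
      simp [mul_pow]
    simp_rw [expand]
    rw [integral_finset_sum]
    · refine Finset.sum_congr rfl fun ν _ => ?_
      rw [integral_const_mul, integral_const_mul, hprodEq]
    · intro ν _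
      exact ((hprodInt _ ν).const_mul _).const_mul _
  refine ⟨hfInt, ?_, ?_⟩
  · -- odd case
    intro hl
    have hzero : ∀ k, ∫ y, (Sk k y) ^ l ∂μ = 0 := by
      intro k
      rw [hTk k]
      refine Finset.sum_eq_zero fun ν hν => ?_
      rw [Finset.mem_piAntidiag] at hν
      have hodd : ∃ j ∈ Finset.Ico s (s+k), Odd (ν j) := by
        by_contra hcon
        push_neg at hcon
        have heven : Even (∑ j ∈ Finset.Ico s (s+k), ν j) :=
          Finset.even_sum _ fun j hj => Nat.not_odd_iff_even.mp (hcon j hj)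
        rw [hν.1] at heven
        exact (Nat.not_even_iff_odd.mpr hl) heven
      obtain ⟨j, hjt, hje⟩ := hodd
      have hz : ∏ j ∈ Finset.Ico s (s+k), M (ν j) = 0 :=
        Finset.prod_eq_zero hjt (M_odd hje)
      rw [hz, mul_zero, mul_zero]
    have h1 : (fun k => ∫ y, (Sk k y) ^ l ∂μ) = fun _ => (0:ℝ) := funext hzero
    rw [h1] at hTend
    show ∫ y, f y ∂μ = 0
    exact tendsto_nhds_unique hTend tendsto_const_nhds
  · -- even case
    intro m hm
    subst hm
    constructor
    · refine integral_nonneg fun y => ?_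
      show (0:ℝ) ≤ f y
      simp only [hfdef]
      rw [pow_mul]
      exact pow_nonneg (sq_nonneg _) m
    · -- upper bound
      set R : {ν : ℕ →₀ ℕ // ν.sum (fun _ n => n) = 2 * m ∧
          (∀ j < s, ν j = 0) ∧ ∀ j, s ≤ j → Even (ν j)} → ℝ := fun ν =>
        ((Nat.factorial (2 * m) : ℝ) /
            ((ν : ℕ →₀ ℕ).prod fun _ n => (Nat.factorial n : ℝ))) *
          ((ν : ℕ →₀ ℕ).prod fun j n => b j ^ n) with hRdef
      have hRnonneg : ∀ x, 0 ≤ R x := by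
        intro x
        simp only [hRdef]
        refine mul_nonneg (div_nonneg (Nat.cast_nonneg _) ?_) ?_
        · rw [Finsupp.prod]
          exact Finset.prod_nonneg fun j _ => Nat.cast_nonneg _
        · rw [Finsupp.prod]
          exact Finset.prod_nonneg fun j _ => pow_nonneg (hb j) _
      have hterm : ∀ (t : Finset ℕ) (ν : ℕ →₀ ℕ), ν.support ⊆ t →
          (ν.sum fun _ n => n) = 2 * m →
          ((Nat.factorial (2 * m) : ℝ) / (ν.prod fun _ n => (Nat.factorial n : ℝ))) *
              (ν.prod fun j n => b j ^ n) =
            (Nat.multinomial t ⇑ν : ℝ) * ∏ j ∈ t, b j ^ ν j := by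
        intro t ν hsupp hs2
        have h1 : (ν.prod fun _ n => (Nat.factorial n : ℝ)) =
            ∏ j ∈ t, ((ν j).factorial : ℝ) :=
          Finsupp.prod_of_support_subset ν hsupp _ (by simp)
        have h2 : (ν.prod fun j n => b j ^ n) = ∏ j ∈ t, b j ^ ν j :=
          Finsupp.prod_of_support_subset ν hsupp _ (by simp)
        have hsumt : ∑ j ∈ t, ν j = 2 * m := by
          rw [← hs2]
          exact (Finsupp.sum_of_support_subset ν hsupp (fun _ n => n) (fun _ _ => rfl)).symm
        have hspec := Nat.multinomial_spec t ⇑ν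
        rw [hsumt] at hspec
        have hspecR : (∏ j ∈ t, ((ν j).factorial : ℝ)) * (Nat.multinomial t ⇑ν : ℝ) =
            ((2 * m).factorial : ℝ) := by exact_mod_cast hspec
        have hD : (∏ j ∈ t, ((ν j).factorial : ℝ)) ≠ 0 := by positivity
        rw [h1, h2, div_mul_eq_mul_div, div_eq_iff hD, ← hspecR]
        ring
      have hsummR : Summable R := by
        refine summable_of_sum_le hRnonneg (c := B ^ (2*m)) fun u => ?_
        set K := s + ((u.sup fun x => (x : ℕ →₀ ℕ).support.sup id) + 1) with hKdef
        have hsupp : ∀ x ∈ u, ((x : ℕ →₀ ℕ)).support ⊆ Finset.Ico s K := by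
          intro x hx j hj
          have hj0 : (x : ℕ →₀ ℕ) j ≠ 0 := Finsupp.mem_support_iff.mp hj
          have hjs : s ≤ j := by
            by_contra hcon
            exact hj0 (x.2.2.1 j (by omega))
          have h1 : j ≤ (x : ℕ →₀ ℕ).support.sup id := Finset.le_sup (f := id) hj
          have h2 : (x.1).support.sup id ≤
              u.sup fun x => (x : ℕ →₀ ℕ).support.sup id := by
            exact Finset.le_sup
              (f := fun x : {ν : ℕ →₀ ℕ // ν.sum (fun _ n => n) = 2 * m ∧ (∀ j < s, ν j = 0) ∧ ∀ j, s ≤ j → Even (ν j)} => (x : ℕ →₀ ℕ).support.sup id) hx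
          exact Finset.mem_Ico.mpr ⟨hjs, by omega⟩
        have hcoe_inj : ∀ x ∈ u, ∀ y ∈ u,
            (⇑(x.1) : ℕ → ℕ) = (⇑(y.1) : ℕ → ℕ) → x = y := by
          intro x _ y _ h
          exact Subtype.ext (DFunLike.coe_injective h)
        calc ∑ x ∈ u, R x
            = ∑ x ∈ u, (Nat.multinomial (Finset.Ico s K) ⇑(x : ℕ →₀ ℕ) : ℝ) *
                ∏ j ∈ Finset.Ico s K, b j ^ (x : ℕ →₀ ℕ) j := by
              refine Finset.sum_congr rfl fun x hx => ?_
              simp only [hRdef]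
              exact hterm _ _ (hsupp x hx) x.2.1
        _ = ∑ g ∈ u.image (fun x : {ν : ℕ →₀ ℕ // ν.sum (fun _ n => n) = 2 * m ∧ (∀ j < s, ν j = 0) ∧ ∀ j, s ≤ j → Even (ν j)} => ⇑(x.1)),
              (Nat.multinomial (Finset.Ico s K) g : ℝ) * ∏ j ∈ Finset.Ico s K, b j ^ g j :=
            (Finset.sum_image (f := fun g => (Nat.multinomial (Finset.Ico s K) g : ℝ) *
              ∏ j ∈ Finset.Ico s K, b j ^ g j) hcoe_inj).symm
        _ ≤ ∑ g ∈ Finset.piAntidiag (Finset.Ico s K) (2*m),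
              (Nat.multinomial (Finset.Ico s K) g : ℝ) * ∏ j ∈ Finset.Ico s K, b j ^ g j := by
            refine Finset.sum_le_sum_of_subset_of_nonneg ?_ fun g _ _ =>
              mul_nonneg (Nat.cast_nonneg _)
                (Finset.prod_nonneg fun j _ => pow_nonneg (hb j) _)
            intro g hg
            rw [Finset.mem_image] at hg
            obtain ⟨x, hx, rfl⟩ := hg
            rw [Finset.mem_piAntidiag]
            refine ⟨?_, fun i hi => hsupp x hx (Finsupp.mem_support_iff.mpr hi)⟩
            exact (Finsupp.sum_of_support_subset x.1 (hsupp x hx) (fun _ n => n)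
              (fun _ _ => rfl)).symm.trans x.2.1
        _ = (∑ j ∈ Finset.Ico s K, b j) ^ (2*m) :=
            (Finset.sum_pow_eq_sum_piAntidiag _ _ _).symm
        _ ≤ B ^ (2*m) := by
            refine pow_le_pow_left₀ (Finset.sum_nonneg fun j _ => hb j) ?_ _
            exact Summable.sum_le_tsum _ (fun i _ => hb i) hsum
      refine le_of_tendsto hTend (Filter.Eventually.of_forall fun k => ?_)
      rw [hTk k]
      set t := Finset.Ico s (s + k) with htdef
      set E := (Finset.piAntidiag t (2*m)).filter (fun ν => ∀ j ∈ t, Even (ν j)) with hEdef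
      have hstep1 : ∑ ν ∈ Finset.piAntidiag t (2*m),
          (Nat.multinomial t ν : ℝ) * ((∏ j ∈ t, b j ^ ν j) * ∏ j ∈ t, M (ν j))
          = ∑ ν ∈ E, (Nat.multinomial t ν : ℝ) *
              ((∏ j ∈ t, b j ^ ν j) * ∏ j ∈ t, M (ν j)) := by
        rw [hEdef]
        refine (Finset.sum_filter_of_ne fun ν hν hne => ?_).symm
        intro j hj
        by_contra hcon
        have hodd : Odd (ν j) := Nat.not_even_iff_odd.mp hcon
        have hz : ∏ j ∈ t, M (ν j) = 0 := Finset.prod_eq_zero hj (M_odd hodd)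
        rw [hz, mul_zero, mul_zero] at hne
        exact hne rfl
      have hstep2 : ∑ ν ∈ E, (Nat.multinomial t ν : ℝ) *
            ((∏ j ∈ t, b j ^ ν j) * ∏ j ∈ t, M (ν j))
          ≤ ∑ ν ∈ E, (Nat.multinomial t ν : ℝ) * ∏ j ∈ t, b j ^ ν j := by
        refine Finset.sum_le_sum fun ν _ => ?_
        have h1 : ∏ j ∈ t, M (ν j) ≤ 1 :=
          Finset.prod_le_one (fun j _ => M_nonneg _) fun j _ => M_le_one _
        have h2 : (0:ℝ) ≤ ∏ j ∈ t, b j ^ ν j :=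
          Finset.prod_nonneg fun j _ => pow_nonneg (hb j) _
        calc (Nat.multinomial t ν : ℝ) * ((∏ j ∈ t, b j ^ ν j) * ∏ j ∈ t, M (ν j))
            ≤ (Nat.multinomial t ν : ℝ) * ((∏ j ∈ t, b j ^ ν j) * 1) := by
              refine mul_le_mul_of_nonneg_left ?_ (Nat.cast_nonneg _)
              exact mul_le_mul_of_nonneg_left h1 h2
        _ = (Nat.multinomial t ν : ℝ) * ∏ j ∈ t, b j ^ ν j := by rw [mul_one]
      have hexists : ∀ p : {ν // ν ∈ E}, ∃ x : {ν : ℕ →₀ ℕ // ν.sum (fun _ n => n) = 2 * m ∧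
          (∀ j < s, ν j = 0) ∧ ∀ j, s ≤ j → Even (ν j)},
          (⇑(x : ℕ →₀ ℕ) : ℕ → ℕ) = (p : ℕ → ℕ) := by
        rintro ⟨ν, hν⟩
        rw [hEdef, Finset.mem_filter] at hν
        obtain ⟨h1, h2⟩ := hν
        rw [Finset.mem_piAntidiag] at h1
        obtain ⟨hsum1, hsupp1⟩ := h1
        set F : ℕ →₀ ℕ := Finsupp.onFinset t ν hsupp1 with hFdef
        have hFcoe : (⇑F : ℕ → ℕ) = ν := rfl
        have hFsupp : F.support ⊆ t := Finsupp.support_onFinset_subset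
        refine ⟨⟨F, ?_, ?_, ?_⟩, rfl⟩
        · rw [Finsupp.sum_of_support_subset F hFsupp _ (by simp)]
          simpa [hFcoe] using hsum1
        · intro j hj
          by_contra hcon
          have := hsupp1 j hcon
          rw [htdef, Finset.mem_Ico] at this
          omega
        · intro j hjs
          by_cases hjt : j ∈ t
          · exact h2 j hjt
          · have : ν j = 0 := by
              by_contra hcon
              exact hjt (hsupp1 j hcon)
            simp [hFcoe, this]
      choose ψ hψ using hexists
      have hstep3 : ∑ ν ∈ E, (Nat.multinomial t ν : ℝ) * ∏ j ∈ t, b j ^ ν j ≤ ∑' x, R x := by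
        have hinj : ∀ p ∈ E.attach, ∀ q ∈ E.attach, ψ p = ψ q → p = q := by
          intro p _ q _ h
          have h' : (⇑((ψ p).1) : ℕ → ℕ) = ⇑((ψ q).1) := by rw [h]
          rw [hψ p, hψ q] at h'
          exact Subtype.ext h'
        have himg : ∑ x ∈ E.attach.image ψ, R x =
            ∑ p ∈ E.attach, (Nat.multinomial t (p : ℕ → ℕ) : ℝ) *
              ∏ j ∈ t, b j ^ (p : ℕ → ℕ) j := by
          rw [Finset.sum_image hinj]
          refine Finset.sum_congr rfl fun p _ => ?_
          have hsupp2 : ((ψ p).1).support ⊆ t := by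
            intro j hj
            have hj0 : ((ψ p).1) j ≠ 0 := Finsupp.mem_support_iff.mp hj
            have hp : p.1 ∈ Finset.piAntidiag t (2*m) ∧ ∀ j ∈ t, Even (p.1 j) := by
              exact Finset.mem_filter.mp p.2
            have hp1 := (Finset.mem_piAntidiag.mp hp.1).2
            refine hp1 j ?_
            have hc := congrFun (hψ p) j
            rw [← hc]
            exact hj0
          simp only [hRdef]
          rw [hterm t ((ψ p).1) hsupp2 (ψ p).2.1]
          rw [hψ p]
        calc ∑ ν ∈ E, (Nat.multinomial t ν : ℝ) * ∏ j ∈ t, b j ^ ν j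
            = ∑ p ∈ E.attach, (Nat.multinomial t (p : ℕ → ℕ) : ℝ) *
              ∏ j ∈ t, b j ^ (p : ℕ → ℕ) j :=
              (Finset.sum_attach E fun ν => (Nat.multinomial t ν : ℝ) * ∏ j ∈ t, b j ^ ν j).symm
        _ = ∑ x ∈ E.attach.image ψ, R x := himg.symm
        _ ≤ ∑' x, R x := Summable.sum_le_tsum _ (fun x _ => hRnonneg x) hsummR
      rw [hstep1]
      exact le_trans hstep2 hstep3
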